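/- arXiv:1312.6187 — 5 statements merged into one kernel-verified Lean document; each statement's English description precedes it below -/
import Mathlib

section
/- For α > 0, the generalized Hermite polynomials satisfy the product formula H^{(α)}_n(x) H^{(α)}_m(x) = ∑_{i=0}^{min(m,n)} α^i i! C(m,i) C(n,i) H^{(α)}_{m+n-2i}(x). -/
open Polynomial

/-- The generalized Hermite polynomial with parameter `α`. -/
noncomputable def genHermite (α : ℝ) (n : ℕ) : Polynomial ℝ :=
  ∑ j ∈ Finset.range (n / 2 + 1),
    C ((n.factorial : ℝ) * (-α) ^ j / (2 ^ j * j.factorial * (n - 2 * j).factorial)) *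
      X ^ (n - 2 * j)

noncomputable def gc (α : ℝ) (N J : ℕ) : ℝ :=
  (N.factorial : ℝ) * (-α) ^ J / (2 ^ J * J.factorial * (N - 2 * J).factorial)

lemma genHermite_eq (α : ℝ) (n : ℕ) :
    genHermite α n = ∑ j ∈ Finset.range (n / 2 + 1), C (gc α n j) * X ^ (n - 2 * j) := rfl

lemma gc_zero (α : ℝ) (N : ℕ) : gc α N 0 = 1 := by
  simp [gc]
  exact Nat.factorial_ne_zero N

lemma gc_rec (α : ℝ) (n j : ℕ) (h : 2 * j + 1 ≤ n) :
    gc α (n+1) (j+1) = gc α (n+2) (j+1) + α * (n+1) * gc α n j := by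
  obtain ⟨d, rfl⟩ : ∃ d, n = 2*j+1+d := ⟨n - (2*j+1), by omega⟩
  unfold gc
  rw [show 2*j+1+d+1 - 2*(j+1) = d from by omega, show 2*j+1+d+2 - 2*(j+1) = d+1 from by omega,
      show 2*j+1+d - 2*j = d+1 from by omega]
  rw [show (2*j+1+d+2).factorial = (2*j+1+d+2) * ((2*j+1+d+1) * (2*j+1+d).factorial) from by
        rw [Nat.factorial_succ, Nat.factorial_succ],
      show (2*j+1+d+1).factorial = (2*j+1+d+1) * (2*j+1+d).factorial from Nat.factorial_succ _,
      show (d+1).factorial = (d+1) * d.factorial from Nat.factorial_succ _,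
      show (j+1).factorial = (j+1) * j.factorial from Nat.factorial_succ _]
  have h1 : ((2*j+1+d).factorial : ℝ) ≠ 0 := by positivity
  have h2 : (d.factorial : ℝ) ≠ 0 := by positivity
  have h3 : (j.factorial : ℝ) ≠ 0 := by positivity
  have h4 : (2:ℝ)^j ≠ 0 := by positivity
  push_cast
  field_simp
  ring

lemma gc_top (α : ℝ) (a : ℕ) :
    gc α (a+a+2) (a+1) + α * ((a:ℝ)+a+1) * gc α (a+a) a = 0 := by
  unfold gc
  rw [show a+a+2 - 2*(a+1) = 0 from by omega, show a+a - 2*a = 0 from by omega]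
  rw [show (a+a+2).factorial = (a+a+2) * ((a+a+1) * (a+a).factorial) from by
        rw [Nat.factorial_succ, Nat.factorial_succ],
      show (a+1).factorial = (a+1) * a.factorial from Nat.factorial_succ _]
  have h1 : ((a+a).factorial : ℝ) ≠ 0 := by positivity
  have h3 : (a.factorial : ℝ) ≠ 0 := by positivity
  have h4 : (2:ℝ)^a ≠ 0 := by positivity
  push_cast
  field_simp
  ring

lemma X_mul_genHermite_succ (α : ℝ) (n : ℕ) :
    X * genHermite α (n+1) = genHermite α (n+2) + C (α * (n+1)) * genHermite α n := by
  rcases Nat.even_or_odd n with ⟨a, rfl⟩ | ⟨a, rfl⟩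
  · -- n = a + a
    rw [genHermite_eq, genHermite_eq, genHermite_eq,
        show (a+a+1)/2 + 1 = a+1 from by omega, show (a+a+2)/2+1 = a+2 from by omega,
        show (a+a)/2+1 = a+1 from by omega, Finset.mul_sum, Finset.mul_sum]
    have hL : ∀ j ∈ Finset.range (a+1),
        X * (C (gc α (a+a+1) j) * X ^ (a+a+1 - 2*j)) = C (gc α (a+a+1) j) * X ^ (a+a+2 - 2*j) := by
      intro j hj
      simp only [Finset.mem_range] at hj
      rw [show a+a+2-2*j = (a+a+1-2*j)+1 from by omega, pow_succ]
      ring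
    rw [Finset.sum_congr rfl hL]
    have hR : ∀ j ∈ Finset.range (a+1),
        C (α*(↑(a+a)+1)) * (C (gc α (a+a) j) * X ^ (a+a - 2*j))
          = C (α*(↑(a+a)+1) * gc α (a+a) j) * X ^ (a+a-2*j) := by
      intro j hj
      rw [← mul_assoc, ← C_mul]
    rw [Finset.sum_congr rfl hR]
    rw [Finset.sum_range_succ' (fun j => C (gc α (a+a+2) j) * X ^ (a+a+2 - 2*j)) (a+1)]
    rw [Finset.sum_range_succ' (fun j => C (gc α (a+a+1) j) * X ^ (a+a+2 - 2*j)) a]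
    have e1 : C (gc α (a+a+1) 0) * X ^ (a+a+2 - 2*0) = C (gc α (a+a+2) 0) * X ^ (a+a+2-2*0) := by
      rw [gc_zero, gc_zero]
    have e2 : (∑ j ∈ Finset.range (a+1), C (gc α (a+a+2) (j+1)) * X ^ (a+a+2 - 2*(j+1)))
        + ∑ j ∈ Finset.range (a+1), C (α*(↑(a+a)+1) * gc α (a+a) j) * X ^ (a+a-2*j)
        = ∑ j ∈ Finset.range a, C (gc α (a+a+1) (j+1)) * X ^ (a+a+2 - 2*(j+1)) := by
      rw [← Finset.sum_add_distrib, Finset.sum_range_succ]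
      have htop : C (gc α (a+a+2) (a+1)) * X ^ (a+a+2 - 2*(a+1))
          + C (α*(↑(a+a)+1) * gc α (a+a) a) * X ^ (a+a-2*a) = 0 := by
        rw [show a+a+2-2*(a+1) = 0 from by omega, show a+a-2*a = 0 from by omega,
            pow_zero, mul_one, mul_one, ← C_add]
        have hx : gc α (a+a+2) (a+1) + α*(↑(a+a)+1) * gc α (a+a) a = 0 := by
          have := gc_top α a
          push_cast at this ⊢
          linarith [this]
        rw [hx, C_0]
      rw [htop, add_zero]
      refine Finset.sum_congr rfl fun j hj => ?_
      simp only [Finset.mem_range] at hj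
      rw [show a+a-2*j = a+a+2-2*(j+1) from by omega, ← add_mul, ← C_add]
      congr 1
      rw [C_inj]
      have := gc_rec α (a+a) j (by omega)
      push_cast at this ⊢
      linarith [this]
    rw [e1, ← e2]
    ring
  · -- n = 2a+1
    rw [genHermite_eq, genHermite_eq, genHermite_eq,
        show (2*a+1+1)/2 + 1 = a+2 from by omega, show (2*a+1+2)/2+1 = a+2 from by omega,
        show (2*a+1)/2+1 = a+1 from by omega, Finset.mul_sum, Finset.mul_sum]
    have hL : ∀ j ∈ Finset.range (a+2),
        X * (C (gc α (2*a+1+1) j) * X ^ (2*a+1+1 - 2*j)) = C (gc α (2*a+2) j) * X ^ (2*a+3 - 2*j) := by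
      intro j hj
      simp only [Finset.mem_range] at hj
      rw [show 2*a+3-2*j = (2*a+1+1-2*j)+1 from by omega, pow_succ, show 2*a+1+1 = 2*a+2 from rfl]
      ring
    rw [Finset.sum_congr rfl hL]
    have hR : ∀ j ∈ Finset.range (a+1),
        C (α*(↑(2*a+1)+1)) * (C (gc α (2*a+1) j) * X ^ (2*a+1 - 2*j))
          = C (α*(↑(2*a+1)+1) * gc α (2*a+1) j) * X ^ (2*a+1-2*j) := by
      intro j hj
      rw [← mul_assoc, ← C_mul]
    rw [Finset.sum_congr rfl hR]
    rw [Finset.sum_range_succ' (fun j => C (gc α (2*a+1+2) j) * X ^ (2*a+1+2 - 2*j)) (a+1)]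
    rw [Finset.sum_range_succ' (fun j => C (gc α (2*a+2) j) * X ^ (2*a+3 - 2*j)) (a+1)]
    have e1 : C (gc α (2*a+2) 0) * X ^ (2*a+3 - 2*0) = C (gc α (2*a+1+2) 0) * X ^ (2*a+1+2-2*0) := by
      rw [gc_zero, gc_zero]
    have e2 : ∑ j ∈ Finset.range (a+1), C (gc α (2*a+2) (j+1)) * X ^ (2*a+3 - 2*(j+1))
        = (∑ j ∈ Finset.range (a+1), C (gc α (2*a+1+2) (j+1)) * X ^ (2*a+1+2 - 2*(j+1)))
          + ∑ j ∈ Finset.range (a+1), C (α*(↑(2*a+1)+1) * gc α (2*a+1) j) * X ^ (2*a+1-2*j) := by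
      rw [← Finset.sum_add_distrib]
      refine Finset.sum_congr rfl fun j hj => ?_
      simp only [Finset.mem_range] at hj
      rw [show 2*a+1-2*j = 2*a+3-2*(j+1) from by omega,
          show 2*a+1+2-2*(j+1) = 2*a+3-2*(j+1) from by omega, ← add_mul, ← C_add]
      congr 1
      rw [C_inj]
      have := gc_rec α (2*a+1) j (by omega)
      push_cast at this ⊢
      linarith [this]
    rw [e1, e2]
    ring

lemma genHermite_zero' (α : ℝ) : genHermite α 0 = 1 := by simp [genHermite]

lemma genHermite_one' (α : ℝ) : genHermite α 1 = X := by simp [genHermite]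


lemma X_mul_genHermite' (α : ℝ) (n : ℕ) :
    X * genHermite α n = genHermite α (n+1) + C (α * n) * genHermite α (n-1) := by
  cases n with
  | zero => simp [genHermite_zero', genHermite_one']
  | succ k =>
    have := X_mul_genHermite_succ α k
    push_cast at this ⊢
    simpa using this

lemma L1 (α : ℝ) (m n i : ℕ) (him : i ≤ m + 1) (hin : i ≤ n) :
    (α ^ i * (i.factorial : ℝ) * ((m+1).choose i : ℝ) * (n.choose i : ℝ)) * (α * ((m+1+n-2*i : ℕ) : ℝ))
      - α * ((m : ℝ) + 1) * (α ^ i * (i.factorial : ℝ) * (m.choose i : ℝ) * (n.choose i : ℝ))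
    = α ^ (i+1) * ((i+1).factorial : ℝ) * ((m+1).choose i : ℝ) * (n.choose (i+1) : ℝ) := by
  have h2i : 2*i ≤ m+1+n := by omega
  have hcast : ((m+1+n-2*i : ℕ) : ℝ) = (m:ℝ)+1+n - 2*i := by
    rw [Nat.cast_sub h2i]; push_cast; ring
  have hid1 : ((n.choose (i+1) : ℕ) : ℝ) * ((i:ℝ)+1) = (n.choose i : ℝ) * ((n:ℝ) - i) := by
    have h := Nat.choose_succ_right_eq n i
    have hni : ((n - i : ℕ) : ℝ) = (n:ℝ) - i := by rw [Nat.cast_sub hin]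
    rw [← hni]; exact_mod_cast h
  have hid2 : ((m.choose i : ℕ) : ℝ) * ((m:ℝ)+1) = ((m+1).choose i : ℝ) * ((m:ℝ)+1-i) := by
    have h := Nat.choose_mul_succ_eq m i
    have hmi : ((m+1-i : ℕ) : ℝ) = (m:ℝ)+1-i := by rw [Nat.cast_sub him]; push_cast; ring
    rw [← hmi]; exact_mod_cast h
  rw [hcast, Nat.factorial_succ]
  push_cast
  linear_combination (-(α^(i+1) * (i.factorial:ℝ) * ((m+1).choose i : ℝ))) * hid1
    + (-(α^(i+1) * (i.factorial:ℝ) * ((n.choose i : ℕ):ℝ))) * hid2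

lemma L2 (α : ℝ) (m n i : ℕ) :
    α ^ (i+1) * ((i+1).factorial : ℝ) * (((m+2).choose (i+1) : ℕ) : ℝ) * ((n.choose (i+1) : ℕ) : ℝ)
    = α ^ (i+1) * ((i+1).factorial : ℝ) * (((m+1).choose (i+1) : ℕ) : ℝ) * ((n.choose (i+1) : ℕ) : ℝ)
      + α ^ (i+1) * ((i+1).factorial : ℝ) * (((m+1).choose i : ℕ) : ℝ) * ((n.choose (i+1) : ℕ) : ℝ) := by
  have h : (m+2).choose (i+1) = (m+1).choose i + (m+1).choose (i+1) := Nat.choose_succ_succ' (m+1) i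
  rw [h]; push_cast; ring

lemma key (α : ℝ) (m n : ℕ) :
    genHermite α n * genHermite α m =
      ∑ i ∈ Finset.range (min m n + 1),
        C (α ^ i * (i.factorial : ℝ) * (m.choose i : ℝ) * (n.choose i : ℝ)) *
          genHermite α (m + n - 2 * i) := by
  induction m using Nat.strong_induction_on generalizing n with
  | _ m ih =>
  obtain _ | _ | m := m
  · simp [genHermite_zero']
  · -- m = 1
    rw [genHermite_one']
    cases n with
    | zero => simp [genHermite_zero', genHermite_one']
    | succ k =>
      rw [show min 1 (k+1) = 1 from by omega, Finset.sum_range_succ, Finset.sum_range_one]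
      rw [mul_comm, X_mul_genHermite_succ α k]
      rw [show 1 + (k+1) - 2*0 = k+2 from by omega, show 1 + (k+1) - 2*1 = k from by omega]
      norm_num [Nat.choose_one_right]
  · -- m + 2
    have hL : genHermite α n * genHermite α (m+2)
        = X * (genHermite α n * genHermite α (m+1))
          - C (α * ((m:ℝ) + 1)) * (genHermite α n * genHermite α m) := by
      linear_combination (-(genHermite α n)) * (X_mul_genHermite_succ α m)
    rw [hL, ih (m+1) (by omega) n, ih m (by omega) n, Finset.mul_sum, Finset.mul_sum]
    have hmid : ∀ i ∈ Finset.range (min (m+1) n + 1),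
        X * (C (α ^ i * (i.factorial : ℝ) * ((m+1).choose i : ℝ) * (n.choose i : ℝ)) *
              genHermite α (m+1+n-2*i))
        = C (α ^ i * (i.factorial : ℝ) * ((m+1).choose i : ℝ) * (n.choose i : ℝ)) *
              genHermite α (m+2+n-2*i)
          + C ((α ^ i * (i.factorial : ℝ) * ((m+1).choose i : ℝ) * (n.choose i : ℝ))
                * (α * ((m+1+n-2*i : ℕ) : ℝ))) * genHermite α (m+n-2*i) := by
      intro i hi
      simp only [Finset.mem_range] at hi
      have hx := X_mul_genHermite' α (m+1+n-2*i)
      rw [show m+1+n-2*i+1 = m+2+n-2*i from by omega,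
          show m+1+n-2*i-1 = m+n-2*i from by omega] at hx
      rw [mul_left_comm, hx]
      simp only [C_mul]
      ring
    rw [Finset.sum_congr rfl hmid, Finset.sum_add_distrib]
    have hmid3 : ∀ i ∈ Finset.range (min m n + 1),
        C (α * ((m:ℝ)+1)) * (C (α ^ i * (i.factorial : ℝ) * (m.choose i : ℝ) * (n.choose i : ℝ)) *
            genHermite α (m+n-2*i))
        = C ((α * ((m:ℝ)+1)) * (α ^ i * (i.factorial : ℝ) * (m.choose i : ℝ) * (n.choose i : ℝ))) *
            genHermite α (m+n-2*i) := by
      intro i _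
      rw [← mul_assoc, ← C_mul]
    rw [Finset.sum_congr rfl hmid3]
    -- extend third sum range
    have hS3 : (∑ i ∈ Finset.range (min m n + 1),
          C ((α * ((m:ℝ)+1)) * (α ^ i * (i.factorial : ℝ) * (m.choose i : ℝ) * (n.choose i : ℝ))) *
            genHermite α (m+n-2*i))
        = ∑ i ∈ Finset.range (min (m+1) n + 1),
          C ((α * ((m:ℝ)+1)) * (α ^ i * (i.factorial : ℝ) * (m.choose i : ℝ) * (n.choose i : ℝ))) *
            genHermite α (m+n-2*i) := by
      apply Finset.sum_subset
      · apply Finset.range_subset_range.mpr; omega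
      · intro i hi hni
        simp only [Finset.mem_range] at hi hni
        have hmi : m < i := by omega
        simp [Nat.choose_eq_zero_of_lt hmi]
    rw [hS3]
    -- combine middle minus third
    have hS23 : (∑ i ∈ Finset.range (min (m+1) n + 1),
          C ((α ^ i * (i.factorial : ℝ) * ((m+1).choose i : ℝ) * (n.choose i : ℝ))
              * (α * ((m+1+n-2*i : ℕ) : ℝ))) * genHermite α (m+n-2*i))
        - (∑ i ∈ Finset.range (min (m+1) n + 1),
          C ((α * ((m:ℝ)+1)) * (α ^ i * (i.factorial : ℝ) * (m.choose i : ℝ) * (n.choose i : ℝ))) *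
            genHermite α (m+n-2*i))
        = ∑ i ∈ Finset.range (min (m+1) n + 1),
          C (α ^ (i+1) * ((i+1).factorial : ℝ) * ((m+1).choose i : ℝ) * (n.choose (i+1) : ℝ)) *
            genHermite α (m+n-2*i) := by
      rw [← Finset.sum_sub_distrib]
      refine Finset.sum_congr rfl fun i hi => ?_
      simp only [Finset.mem_range] at hi
      rw [← sub_mul, ← C_sub]
      congr 2
      exact L1 α m n i (by omega) (by omega)
    -- trim F-sum to range (min (m+2) n)
    have hTa : (∑ i ∈ Finset.range (min (m+1) n + 1),
          C (α ^ (i+1) * ((i+1).factorial : ℝ) * ((m+1).choose i : ℝ) * (n.choose (i+1) : ℝ)) *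
            genHermite α (m+n-2*i))
        = ∑ i ∈ Finset.range (min (m+2) n),
          C (α ^ (i+1) * ((i+1).factorial : ℝ) * ((m+1).choose i : ℝ) * (n.choose (i+1) : ℝ)) *
            genHermite α (m+n-2*i) := by
      symm
      apply Finset.sum_subset
      · apply Finset.range_subset_range.mpr; omega
      · intro i hi hni
        simp only [Finset.mem_range] at hi hni
        have hni' : n < i + 1 := by omega
        simp [Nat.choose_eq_zero_of_lt hni']
    -- extend first sum to range (min (m+2) n + 1)
    have hS1 : (∑ i ∈ Finset.range (min (m+1) n + 1),
          C (α ^ i * (i.factorial : ℝ) * ((m+1).choose i : ℝ) * (n.choose i : ℝ)) *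
            genHermite α (m+2+n-2*i))
        = ∑ i ∈ Finset.range (min (m+2) n + 1),
          C (α ^ i * (i.factorial : ℝ) * ((m+1).choose i : ℝ) * (n.choose i : ℝ)) *
            genHermite α (m+2+n-2*i) := by
      apply Finset.sum_subset
      · apply Finset.range_subset_range.mpr; omega
      · intro i hi hni
        simp only [Finset.mem_range] at hi hni
        have hmi : m + 1 < i := by omega
        simp [Nat.choose_eq_zero_of_lt hmi]
    -- now prove target equals first-sum + F-sum
    have hsplit : ∀ i : ℕ,
        C (α ^ (i+1) * ((i+1).factorial : ℝ) * ((m+2).choose (i+1) : ℝ) * (n.choose (i+1) : ℝ)) *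
            genHermite α (m+2+n-2*(i+1))
        = C (α ^ (i+1) * ((i+1).factorial : ℝ) * ((m+1).choose (i+1) : ℝ) * (n.choose (i+1) : ℝ)) *
            genHermite α (m+2+n-2*(i+1))
          + C (α ^ (i+1) * ((i+1).factorial : ℝ) * ((m+1).choose i : ℝ) * (n.choose (i+1) : ℝ)) *
            genHermite α (m+n-2*i) := by
      intro i
      rw [show m+n-2*i = m+2+n-2*(i+1) from by omega, ← add_mul, ← C_add]
      congr 2
      exact L2 α m n i
    have hT : (∑ i ∈ Finset.range (min (m+2) n + 1),
          C (α ^ i * (i.factorial : ℝ) * ((m+2).choose i : ℝ) * (n.choose i : ℝ)) *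
            genHermite α (m+2+n-2*i))
        = (∑ i ∈ Finset.range (min (m+2) n + 1),
            C (α ^ i * (i.factorial : ℝ) * ((m+1).choose i : ℝ) * (n.choose i : ℝ)) *
              genHermite α (m+2+n-2*i))
          + ∑ i ∈ Finset.range (min (m+2) n),
            C (α ^ (i+1) * ((i+1).factorial : ℝ) * ((m+1).choose i : ℝ) * (n.choose (i+1) : ℝ)) *
              genHermite α (m+n-2*i) := by
      rw [Finset.sum_range_succ' (fun i =>
            C (α ^ i * (i.factorial : ℝ) * ((m+2).choose i : ℝ) * (n.choose i : ℝ)) *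
              genHermite α (m+2+n-2*i)) (min (m+2) n),
          Finset.sum_range_succ' (fun i =>
            C (α ^ i * (i.factorial : ℝ) * ((m+1).choose i : ℝ) * (n.choose i : ℝ)) *
              genHermite α (m+2+n-2*i)) (min (m+2) n)]
      rw [Finset.sum_congr rfl (fun i _ => hsplit i), Finset.sum_add_distrib]
      norm_num
      ring
    rw [hT, ← hS1, ← hTa, ← hS23]
    ring

theorem stmt_6 (α : ℝ) (hα : 0 < α) (m n : ℕ) :
    genHermite α n * genHermite α m =
      ∑ i ∈ Finset.range (min m n + 1),
        C (α ^ i * (i.factorial : ℝ) * (m.choose i : ℝ) * (n.choose i : ℝ)) *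
          genHermite α (m + n - 2 * i) := key α m n
end

section
/- The classical Hermite polynomials H_n satisfy Carlitz's linearization formula: H_n(x) H_m(x) = ∑_{i=0}^{min(m,n)} 2^i i! C(m,i) C(n,i) H_{m+n-2i}(x). -/
open Polynomial

/-- The classical (physicists') Hermite polynomials:
`H_0 = 1`, `H_1 = 2x`, `H_{n+2}(x) = 2x H_{n+1}(x) - 2(n+1) H_n(x)`. -/
noncomputable def physHermite : ℕ → Polynomial ℝ
  | 0 => 1
  | 1 => 2 * X
  | (n + 2) => 2 * X * physHermite (n + 1) - C (2 * ((n : ℝ) + 1)) * physHermite n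

lemma hermite_two_X_mul (k : ℕ) :
    2 * X * physHermite k = physHermite (k+1) + C (2*(k:ℝ)) * physHermite (k-1) := by
  cases k with
  | zero => simp [physHermite]
  | succ k =>
      show 2 * X * physHermite (k+1) = physHermite (k+2) + _
      rw [physHermite]
      push_cast
      ring_nf

lemma ch1 (m j : ℕ) : ((j:ℝ)+1) * (m.choose (j+1) : ℝ) = (m:ℝ) * (m.choose j : ℝ) - (j:ℝ) * (m.choose j : ℝ) := by
  rcases le_or_gt j m with h | h
  · have h2 : ((m.choose (j+1) * (j+1) : ℕ) : ℝ) = ((m.choose j * (m - j) : ℕ) : ℝ) := by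
      rw [Nat.choose_succ_right_eq m j]
    push_cast [Nat.cast_sub h] at h2
    linarith
  · rw [Nat.choose_eq_zero_of_lt h, Nat.choose_eq_zero_of_lt (by omega)]
    simp

lemma ch2 (n j : ℕ) : ((n:ℝ)+1-(j:ℝ)) * (((n+1).choose j : ℕ) : ℝ) = ((n:ℝ)+1) * ((n.choose j : ℕ) : ℝ) := by
  rcases le_or_gt j (n+1) with h | h
  · have h2 : ((n.choose j * (n+1) : ℕ) : ℝ) = (((n+1).choose j * (n + 1 - j) : ℕ) : ℝ) := by
      rw [Nat.choose_mul_succ_eq n j]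
    push_cast [Nat.cast_sub h] at h2
    linarith
  · rw [Nat.choose_eq_zero_of_lt h, Nat.choose_eq_zero_of_lt (by omega)]
    simp

lemma coeff_step (m n j : ℕ) (hj : j < n + 2) :
    (2:ℝ)^(j+1) * ((j+1).factorial : ℝ) * (m.choose (j+1) : ℝ) * ((n+2).choose (j+1) : ℝ)
      = (2:ℝ)^(j+1) * ((j+1).factorial : ℝ) * (m.choose (j+1) : ℝ) * ((n+1).choose (j+1) : ℝ)
        + ((2:ℝ)^j * (j.factorial : ℝ) * (m.choose j : ℝ) * ((n+1).choose j : ℝ)) * (2*((m+(n+1)-2*j : ℕ):ℝ))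
        - 2*((n:ℝ)+1) * ((2:ℝ)^j * (j.factorial : ℝ) * (m.choose j : ℝ) * (n.choose j : ℝ)) := by
  by_cases h : 2*j ≤ m+n
  · have hc : ((m+(n+1)-2*j : ℕ):ℝ) = (m:ℝ)+(n:ℝ)+1-2*(j:ℝ) := by
      push_cast [Nat.cast_sub (by omega : 2*j ≤ m+(n+1))]
      ring
    have hp : (((n+2).choose (j+1) : ℕ) : ℝ) = (((n+1).choose j : ℕ):ℝ) + (((n+1).choose (j+1) : ℕ):ℝ) := by
      exact_mod_cast congrArg (Nat.cast : ℕ → ℝ) (Nat.choose_succ_succ (n+1) j)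
    have h1 := ch1 m j
    have h2 := ch2 n j
    rw [hc, hp, Nat.factorial_succ]
    push_cast
    linear_combination ((2:ℝ)^(j+1) * (j.factorial:ℝ) * (((n+1).choose j : ℕ):ℝ)) * h1
      - ((2:ℝ)^(j+1) * (j.factorial:ℝ) * ((m.choose j : ℕ):ℝ)) * h2
  · have h0 : m+(n+1)-2*j = 0 := by omega
    rw [h0]
    rcases lt_or_ge m j with hm | hm
    · simp [Nat.choose_eq_zero_of_lt hm, Nat.choose_eq_zero_of_lt (show m < j+1 by omega)]
    · have hn : n < j := by omega
      have h1 : (n+1).choose (j+1) = 0 := Nat.choose_eq_zero_of_lt (by omega)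
      have h2 : n.choose j = 0 := Nat.choose_eq_zero_of_lt hn
      have h3 : (m.choose (j+1) : ℝ) * ((n+2).choose (j+1) : ℝ) = 0 := by
        rcases eq_or_lt_of_le hm with he | hl
        · rw [← he, Nat.choose_eq_zero_of_lt (by omega : j < j+1)]
          simp
        · rw [Nat.choose_eq_zero_of_lt (show n+2 < j+1 by omega)]
          simp
      rw [h1, h2]
      push_cast
      linear_combination ((2:ℝ)^(j+1) * (((j+1).factorial : ℕ):ℝ)) * h3

lemma hermite_key : ∀ n m : ℕ, physHermite n * physHermite m =
    ∑ i ∈ Finset.range (n+1),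
      C ((2:ℝ)^i * (i.factorial : ℝ) * (m.choose i : ℝ) * (n.choose i : ℝ)) *
        physHermite (m + n - 2*i) := by
  intro n
  induction n using Nat.twoStepInduction with
  | zero => intro m; simp [physHermite]
  | one =>
      intro m
      have h1 : physHermite 1 = 2 * X := rfl
      rw [h1, hermite_two_X_mul m]
      rw [Finset.sum_range_succ, Finset.sum_range_succ, Finset.sum_range_zero]
      have : m + 1 - 2*1 = m - 1 := by omega
      rw [this]
      simp [Nat.choose_one_right]
  | more n ihn ihn1 =>
      intro m
      have expand : physHermite (n+2) * physHermite m
          = 2*X*(physHermite (n+1) * physHermite m)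
            - C (2*((n:ℝ)+1)) * (physHermite n * physHermite m) := by
        rw [physHermite]; ring
      calc physHermite (n+2) * physHermite m
          = 2*X*(physHermite (n+1) * physHermite m)
            - C (2*((n:ℝ)+1)) * (physHermite n * physHermite m) := expand
        _ = (∑ i ∈ Finset.range (n+2),
              (C ((2:ℝ)^i * (i.factorial : ℝ) * (m.choose i : ℝ) * ((n+1).choose i : ℝ)) *
                  physHermite (m+(n+2)-2*i)
                + C (((2:ℝ)^i * (i.factorial : ℝ) * (m.choose i : ℝ) * ((n+1).choose i : ℝ))
                      * (2*((m+(n+1)-2*i : ℕ):ℝ))) * physHermite (m+n-2*i)))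
            - ∑ i ∈ Finset.range (n+1),
                C (2*((n:ℝ)+1) * ((2:ℝ)^i * (i.factorial : ℝ) * (m.choose i : ℝ) * (n.choose i : ℝ))) *
                  physHermite (m+n-2*i) := by
            rw [ihn1 m, ihn m, Finset.mul_sum, Finset.mul_sum]
            congr 1
            · apply Finset.sum_congr rfl
              intro i hi
              have hi' : i < n + 2 := Finset.mem_range.mp hi
              have step : 2*X*(C ((2:ℝ)^i * (i.factorial : ℝ) * (m.choose i : ℝ) * ((n+1).choose i : ℝ)) *
                  physHermite (m+(n+1)-2*i))
                  = C ((2:ℝ)^i * (i.factorial : ℝ) * (m.choose i : ℝ) * ((n+1).choose i : ℝ)) *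
                      (physHermite ((m+(n+1)-2*i)+1)
                        + C (2*((m+(n+1)-2*i : ℕ):ℝ)) * physHermite ((m+(n+1)-2*i)-1)) := by
                rw [← hermite_two_X_mul]
                ring
              rw [step]
              by_cases h : 2*i ≤ m+n
              · have e1 : m+(n+1)-2*i+1 = m+(n+2)-2*i := by omega
                have e2 : m+(n+1)-2*i-1 = m+n-2*i := by omega
                rw [e1, e2, mul_add, ← mul_assoc, ← C_mul]
              · by_cases h2 : 2*i ≤ m+(n+1)
                · have e1 : m+(n+1)-2*i+1 = m+(n+2)-2*i := by omega
                  have ez : m+(n+1)-2*i = 0 := by omega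
                  rw [e1, ez]
                  simp
                · have hm : m < i := by omega
                  rw [Nat.choose_eq_zero_of_lt hm]
                  simp
            · apply Finset.sum_congr rfl
              intro i hi
              rw [← mul_assoc, ← C_mul]
        _ = (∑ i ∈ Finset.range (n+2),
              (C ((2:ℝ)^i * (i.factorial : ℝ) * (m.choose i : ℝ) * ((n+1).choose i : ℝ)) *
                  physHermite (m+(n+2)-2*i)
                + C (((2:ℝ)^i * (i.factorial : ℝ) * (m.choose i : ℝ) * ((n+1).choose i : ℝ))
                      * (2*((m+(n+1)-2*i : ℕ):ℝ))) * physHermite (m+n-2*i)))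
            - ∑ i ∈ Finset.range (n+2),
                C (2*((n:ℝ)+1) * ((2:ℝ)^i * (i.factorial : ℝ) * (m.choose i : ℝ) * (n.choose i : ℝ))) *
                  physHermite (m+n-2*i) := by
            congr 1
            have hpe : ∑ i ∈ Finset.range (n+2),
                C (2*((n:ℝ)+1) * ((2:ℝ)^i * (i.factorial : ℝ) * (m.choose i : ℝ) * (n.choose i : ℝ))) *
                  physHermite (m+n-2*i)
                = (∑ i ∈ Finset.range (n+1),
                C (2*((n:ℝ)+1) * ((2:ℝ)^i * (i.factorial : ℝ) * (m.choose i : ℝ) * (n.choose i : ℝ))) *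
                  physHermite (m+n-2*i))
                  + C (2*((n:ℝ)+1) * ((2:ℝ)^(n+1) * ((n+1).factorial : ℝ) * (m.choose (n+1) : ℝ) * (n.choose (n+1) : ℝ))) *
                  physHermite (m+n-2*(n+1)) := Finset.sum_range_succ _ (n+1)
            rw [hpe, Nat.choose_eq_zero_of_lt (show n < n+1 by omega)]
            simp
        _ = (∑ i ∈ Finset.range (n+2),
              C ((2:ℝ)^i * (i.factorial : ℝ) * (m.choose i : ℝ) * ((n+1).choose i : ℝ)) *
                  physHermite (m+(n+2)-2*i))
            + ∑ i ∈ Finset.range (n+2),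
              (C (((2:ℝ)^i * (i.factorial : ℝ) * (m.choose i : ℝ) * ((n+1).choose i : ℝ))
                      * (2*((m+(n+1)-2*i : ℕ):ℝ))) * physHermite (m+n-2*i)
                - C (2*((n:ℝ)+1) * ((2:ℝ)^i * (i.factorial : ℝ) * (m.choose i : ℝ) * (n.choose i : ℝ))) *
                  physHermite (m+n-2*i)) := by
            rw [Finset.sum_sub_distrib, Finset.sum_add_distrib]
            ring
        _ = ((∑ i ∈ Finset.range (n+2),
              C ((2:ℝ)^(i+1) * ((i+1).factorial : ℝ) * (m.choose (i+1) : ℝ) * ((n+1).choose (i+1) : ℝ)) *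
                  physHermite (m+(n+2)-2*(i+1)))
              + C ((2:ℝ)^0 * ((0:ℕ).factorial : ℝ) * (m.choose 0 : ℝ) * ((n+1).choose 0 : ℝ)) *
                  physHermite (m+(n+2)-2*0))
            + ∑ i ∈ Finset.range (n+2),
              (C (((2:ℝ)^i * (i.factorial : ℝ) * (m.choose i : ℝ) * ((n+1).choose i : ℝ))
                      * (2*((m+(n+1)-2*i : ℕ):ℝ))) * physHermite (m+n-2*i)
                - C (2*((n:ℝ)+1) * ((2:ℝ)^i * (i.factorial : ℝ) * (m.choose i : ℝ) * (n.choose i : ℝ))) *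
                  physHermite (m+n-2*i)) := by
            congr 1
            rw [Finset.sum_range_succ'
              (fun i => C ((2:ℝ)^i * (i.factorial : ℝ) * (m.choose i : ℝ) * ((n+1).choose i : ℝ)) *
                  physHermite (m+(n+2)-2*i)) (n+1)]
            congr 1
            have hpe : ∑ i ∈ Finset.range (n+2),
                C ((2:ℝ)^(i+1) * ((i+1).factorial : ℝ) * (m.choose (i+1) : ℝ) * ((n+1).choose (i+1) : ℝ)) *
                  physHermite (m+(n+2)-2*(i+1))
                = (∑ i ∈ Finset.range (n+1),
                C ((2:ℝ)^(i+1) * ((i+1).factorial : ℝ) * (m.choose (i+1) : ℝ) * ((n+1).choose (i+1) : ℝ)) *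
                  physHermite (m+(n+2)-2*(i+1)))
                  + C ((2:ℝ)^(n+1+1) * ((n+1+1).factorial : ℝ) * (m.choose (n+1+1) : ℝ) * ((n+1).choose (n+1+1) : ℝ)) *
                  physHermite (m+(n+2)-2*(n+1+1)) := Finset.sum_range_succ _ (n+1)
            rw [hpe, Nat.choose_eq_zero_of_lt (show n+1 < n+1+1 by omega)]
            simp
        _ = ∑ i ∈ Finset.range (n+2+1),
              C ((2:ℝ)^i * (i.factorial : ℝ) * (m.choose i : ℝ) * ((n+2).choose i : ℝ)) *
                physHermite (m + (n+2) - 2*i) := by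
            rw [Finset.sum_range_succ'
              (fun i => C ((2:ℝ)^i * (i.factorial : ℝ) * (m.choose i : ℝ) * ((n+2).choose i : ℝ)) *
                physHermite (m + (n+2) - 2*i)) (n+2)]
            rw [add_right_comm]
            congr 1
            · rw [← Finset.sum_add_distrib]
              apply Finset.sum_congr rfl
              intro i hi
              have hi' : i < n + 2 := Finset.mem_range.mp hi
              have hidx : m+(n+2)-2*(i+1) = m+n-2*i := by omega
              rw [hidx, coeff_step m n i hi', C_sub, C_add]
              ring

theorem stmt_7 (m n : ℕ) :
    physHermite n * physHermite m =
      ∑ i ∈ Finset.range (min m n + 1),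
        C ((2 : ℝ) ^ i * (i.factorial : ℝ) * (m.choose i : ℝ) * (n.choose i : ℝ)) *
          physHermite (m + n - 2 * i) := by
  rw [hermite_key n m]
  refine (Finset.sum_subset ?_ ?_).symm
  · intro i hi
    simp only [Finset.mem_range] at *
    omega
  · intro i hi hni
    simp only [Finset.mem_range] at *
    have hm : m < i := by omega
    rw [Nat.choose_eq_zero_of_lt hm]
    simp
end

section
/- Let {γ_n} be a real sequence, g*_n(-1) = ∑_{k=0}^{n} C(n,k) γ_k (-1)^{n-k}, α > 0, and for k ≥ 2 let Q_k(x) = ∑_{j=0}^{⌊k/2⌋} ((-α)^j / (j!(k-2j)!)) g*_{k-j}(-1) H^{(α)}_{k-2j}(x). If Q_k has only real zeros, then (g*_k(-1))² + 2 g*_k(-1) g*_{k-1}(-1) ≥ 0. -/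
open Polynomial

/-- `g*_n(-1) = ∑_{k=0}^n C(n,k) γ_k (-1)^{n-k}`. -/
noncomputable def gstar (γ : ℕ → ℝ) (n : ℕ) : ℝ :=
  ∑ k ∈ Finset.range (n + 1), (n.choose k : ℝ) * γ k * (-1) ^ (n - k)

/-- The coefficient polynomials of the Hermite-diagonal operator. -/
noncomputable def Qpoly (α : ℝ) (γ : ℕ → ℝ) (k : ℕ) : Polynomial ℝ :=
  ∑ j ∈ Finset.range (k / 2 + 1),
    C ((-α) ^ j / (j.factorial * (k - 2 * j).factorial) * gstar γ (k - j)) *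
      genHermite α (k - 2 * j)

section Aux
open Multiset

lemma esymm_one' (s : Multiset ℂ) : s.esymm 1 = s.sum := by
  rw [Multiset.esymm, powersetCard_one, Multiset.map_map]
  simp

lemma esymm_two_cons (a : ℂ) (s : Multiset ℂ) :
    (a ::ₘ s).esymm 2 = s.esymm 2 + a * s.sum := by
  rw [Multiset.esymm, show (2:ℕ) = 1 + 1 from rfl, powersetCard_cons, Multiset.map_add,
    Multiset.sum_add, Multiset.map_map]
  rw [Multiset.esymm]
  congr 1
  rw [powersetCard_one, Multiset.map_map]
  simp only [Function.comp_apply, Multiset.prod_cons, Multiset.prod_singleton]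
  simpa using Multiset.sum_map_mul_left (s := s) (a := a) (f := fun x => x)

lemma sq_sum_multiset (s : Multiset ℂ) :
    s.sum ^ 2 = (s.map (· ^ 2)).sum + 2 * s.esymm 2 := by
  induction s using Multiset.induction with
  | empty => simp [Multiset.esymm, Multiset.powersetCard_eq_empty 2 (s := (0 : Multiset ℂ)) (by simp)]
  | cons a s ih =>
    rw [Multiset.sum_cons, Multiset.map_cons, Multiset.sum_cons, esymm_two_cons]
    ring_nf
    ring_nf at ih
    linear_combination ih

lemma key_lemma (P : Polynomial ℝ) (hn : 2 ≤ P.natDegree)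
    (h1 : P.coeff (P.natDegree - 1) = 0)
    (hroots : ∀ z : ℂ, (P.map (algebraMap ℝ ℂ)).IsRoot z → z.im = 0) :
    P.leadingCoeff * P.coeff (P.natDegree - 2) ≤ 0 := by
  have hP0 : P ≠ 0 := fun h => by simp [h] at hn
  set Pc := P.map (algebraMap ℝ ℂ) with hPc
  have hPc0 : Pc ≠ 0 := (Polynomial.map_ne_zero_iff (algebraMap ℝ ℂ).injective).2 hP0
  have hdeg : Pc.natDegree = P.natDegree := P.natDegree_map (algebraMap ℝ ℂ)
  have hcard : Multiset.card Pc.roots = Pc.natDegree :=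
    Polynomial.splits_iff_card_roots.1 (IsAlgClosed.splits Pc)
  have hlead : Pc.leadingCoeff = (P.leadingCoeff : ℂ) := Polynomial.leadingCoeff_map_of_injective (algebraMap ℝ ℂ).injective P
  have hlead0 : (P.leadingCoeff : ℂ) ≠ 0 := by
    exact_mod_cast Polynomial.leadingCoeff_ne_zero.2 hP0
  set R := Pc.roots with hR
  -- coeff at natDegree - 1
  have hc1 : Pc.coeff (Pc.natDegree - 1) =
      Pc.leadingCoeff * (-1) ^ (Pc.natDegree - (Pc.natDegree - 1)) * R.esymm (Pc.natDegree - (Pc.natDegree - 1)) :=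
    Polynomial.coeff_eq_esymm_roots_of_card hcard (Nat.sub_le _ _)
  have hc2 : Pc.coeff (Pc.natDegree - 2) =
      Pc.leadingCoeff * (-1) ^ (Pc.natDegree - (Pc.natDegree - 2)) * R.esymm (Pc.natDegree - (Pc.natDegree - 2)) :=
    Polynomial.coeff_eq_esymm_roots_of_card hcard (Nat.sub_le _ _)
  have hn' : 2 ≤ Pc.natDegree := hdeg ▸ hn
  have e1 : Pc.natDegree - (Pc.natDegree - 1) = 1 := by omega
  have e2 : Pc.natDegree - (Pc.natDegree - 2) = 2 := by omega
  rw [e1] at hc1; rw [e2] at hc2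
  have hcoeff1 : Pc.coeff (Pc.natDegree - 1) = 0 := by
    simp [hdeg, hPc, Polynomial.coeff_map, h1]
  have hsum0 : R.sum = 0 := by
    have := hc1
    rw [hcoeff1, hlead, esymm_one' R] at this
    have h2 : (P.leadingCoeff : ℂ) * R.sum = 0 := by
      linear_combination this
    rcases mul_eq_zero.1 h2 with h | h
    · exact absurd h hlead0
    · exact h
  -- sum of squares
  have hsq : (R.map (· ^ 2)).sum + 2 * R.esymm 2 = 0 := by
    have := sq_sum_multiset R
    rw [hsum0] at this
    linear_combination -this
  -- real parts
  have him : ∀ z ∈ R, z.im = 0 := by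
    intro z hz
    exact hroots z (Polynomial.isRoot_of_mem_roots hz)
  have hre : 0 ≤ ((R.map (· ^ 2)).sum).re := by
    have heq : ((R.map (· ^ 2)).sum).re = ((R.map (· ^ 2)).map Complex.reAddGroupHom).sum :=
      map_multiset_sum Complex.reAddGroupHom _
    rw [heq]
    refine Multiset.sum_nonneg ?_
    intro y hy
    rw [Multiset.map_map] at hy
    obtain ⟨z, hz, rfl⟩ := Multiset.mem_map.1 hy
    have hz0 : z.im = 0 := him z hz
    have : Complex.reAddGroupHom (z ^ 2) = z.re ^ 2 - z.im ^ 2 := by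
      simp [Complex.reAddGroupHom, sq, Complex.mul_re]
    simp only [Function.comp_apply]
    rw [this, hz0]
    nlinarith [sq_nonneg z.re]
  -- conclude
  have hre2 : (R.esymm 2).re ≤ 0 := by
    have := congrArg Complex.re hsq
    simp only [Complex.add_re, Complex.mul_re, Complex.re_ofNat, Complex.im_ofNat,
      Complex.zero_re] at this
    nlinarith [this]
  have hc2' : (P.coeff (P.natDegree - 2) : ℂ) = (P.leadingCoeff : ℂ) * R.esymm 2 := by
    have h := hc2
    rw [hlead] at h
    have hl : Pc.coeff (Pc.natDegree - 2) = ((P.coeff (P.natDegree - 2) : ℂ)) := by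
      rw [hdeg, hPc, Polynomial.coeff_map]; rfl
    rw [hl] at h
    rw [h]; ring
  have hL0 : P.leadingCoeff ≠ 0 := Polynomial.leadingCoeff_ne_zero.2 hP0
  have hE : R.esymm 2 = ((P.coeff (P.natDegree - 2) / P.leadingCoeff : ℝ) : ℂ) := by
    rw [Complex.ofReal_div, eq_div_iff hlead0]
    linear_combination -hc2'
  have hdiv : P.coeff (P.natDegree - 2) / P.leadingCoeff ≤ 0 := by
    have := hre2
    rw [hE, Complex.ofReal_re] at this
    exact this
  have hfin : P.leadingCoeff * P.coeff (P.natDegree - 2) =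
      P.leadingCoeff ^ 2 * (P.coeff (P.natDegree - 2) / P.leadingCoeff) := by
    field_simp
  rw [hfin]
  nlinarith [sq_nonneg P.leadingCoeff]

lemma genHermite_coeff (α : ℝ) (n m : ℕ) :
    (genHermite α n).coeff m = ∑ j ∈ Finset.range (n / 2 + 1),
      if n - 2 * j = m then
        (n.factorial : ℝ) * (-α) ^ j / (2 ^ j * j.factorial * (n - 2 * j).factorial) else 0 := by
  rw [genHermite, Polynomial.finset_sum_coeff]
  refine Finset.sum_congr rfl fun j _ => ?_
  rw [Polynomial.coeff_C_mul, Polynomial.coeff_X_pow]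
  split <;> simp_all [eq_comm]

lemma genHermite_natDegree_le (α : ℝ) (n : ℕ) : (genHermite α n).natDegree ≤ n := by
  refine Polynomial.natDegree_sum_le_of_forall_le _ _ fun j hj => ?_
  exact le_trans (Polynomial.natDegree_C_mul_le _ _)
    (le_trans (Polynomial.natDegree_X_pow_le _) (Nat.sub_le _ _))

lemma genHermite_coeff_self (α : ℝ) (n : ℕ) : (genHermite α n).coeff n = 1 := by
  rw [genHermite_coeff]
  rw [Finset.sum_eq_single 0]
  · have hf : ((n.factorial : ℝ)) ≠ 0 := Nat.cast_ne_zero.2 n.factorial_ne_zero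
    simp [div_self hf]
  · intro j hj hj0
    rw [Finset.mem_range] at hj
    have : n - 2 * j ≠ n := by omega
    simp [this]
  · simp

lemma genHermite_coeff_pred (α : ℝ) (n : ℕ) (hn : 1 ≤ n) :
    (genHermite α n).coeff (n - 1) = 0 := by
  rw [genHermite_coeff]
  refine Finset.sum_eq_zero fun j hj => ?_
  rw [Finset.mem_range] at hj
  have : n - 2 * j ≠ n - 1 := by omega
  simp [this]

lemma genHermite_coeff_sub2 (α : ℝ) (n : ℕ) (hn : 2 ≤ n) :
    (genHermite α n).coeff (n - 2) = -(α * n * ((n : ℝ) - 1)) / 2 := by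
  rw [genHermite_coeff]
  rw [Finset.sum_eq_single 1]
  · obtain ⟨m, rfl⟩ : ∃ m, n = m + 2 := ⟨n - 2, by omega⟩
    rw [if_pos (show m + 2 - 2 * 1 = m + 2 - 2 by omega)]
    have h1 : m + 2 - 2 * 1 = m := by omega
    have hfac : ((m + 2).factorial : ℝ) = (m + 2) * (m + 1) * m.factorial := by
      rw [show m + 2 = m + 1 + 1 from rfl, Nat.factorial_succ, Nat.factorial_succ]
      push_cast; ring
    have hm : (m.factorial : ℝ) ≠ 0 := Nat.cast_ne_zero.2 m.factorial_ne_zero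
    rw [h1, hfac]
    have hm1 : ((Nat.factorial 1 : ℕ) : ℝ) = 1 := by norm_num [Nat.factorial]
    rw [hm1]
    field_simp
    push_cast
    ring
  · intro j hj hj1
    rw [Finset.mem_range] at hj
    have : n - 2 * j ≠ n - 2 := by omega
    rw [if_neg this]
  · intro h
    exfalso; apply h
    rw [Finset.mem_range]; omega

lemma Qpoly_coeff (α : ℝ) (γ : ℕ → ℝ) (k m : ℕ) :
    (Qpoly α γ k).coeff m = ∑ j ∈ Finset.range (k / 2 + 1),
      (-α) ^ j / (j.factorial * (k - 2 * j).factorial) * gstar γ (k - j) *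
        (genHermite α (k - 2 * j)).coeff m := by
  rw [Qpoly, Polynomial.finset_sum_coeff]
  exact Finset.sum_congr rfl fun j _ => Polynomial.coeff_C_mul _

lemma Qpoly_natDegree_le (α : ℝ) (γ : ℕ → ℝ) (k : ℕ) : (Qpoly α γ k).natDegree ≤ k := by
  refine Polynomial.natDegree_sum_le_of_forall_le _ _ fun j hj => ?_
  exact le_trans (Polynomial.natDegree_C_mul_le _ _)
    (le_trans (genHermite_natDegree_le _ _) (Nat.sub_le _ _))

lemma Qpoly_coeff_top (α : ℝ) (γ : ℕ → ℝ) (k : ℕ) :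
    (Qpoly α γ k).coeff k = gstar γ k / k.factorial := by
  rw [Qpoly_coeff, Finset.sum_eq_single 0]
  · simp [genHermite_coeff_self, div_eq_iff, mul_comm]
    ring
  · intro j hj hj0
    rw [Finset.mem_range] at hj
    have hlt : (genHermite α (k - 2 * j)).natDegree < k :=
      lt_of_le_of_lt (genHermite_natDegree_le _ _) (by omega)
    rw [Polynomial.coeff_eq_zero_of_natDegree_lt hlt, mul_zero]
  · simp

lemma Qpoly_coeff_pred (α : ℝ) (γ : ℕ → ℝ) (k : ℕ) (hk : 2 ≤ k) :
    (Qpoly α γ k).coeff (k - 1) = 0 := by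
  rw [Qpoly_coeff]
  refine Finset.sum_eq_zero fun j hj => ?_
  rw [Finset.mem_range] at hj
  rcases Nat.eq_zero_or_pos j with rfl | hj0
  · simp [genHermite_coeff_pred α k (by omega)]
  · have hlt : (genHermite α (k - 2 * j)).natDegree < k - 1 :=
      lt_of_le_of_lt (genHermite_natDegree_le _ _) (by omega)
    rw [Polynomial.coeff_eq_zero_of_natDegree_lt hlt, mul_zero]

lemma Qpoly_coeff_sub2 (α : ℝ) (γ : ℕ → ℝ) (k : ℕ) (hk : 2 ≤ k) :
    (Qpoly α γ k).coeff (k - 2) =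
      gstar γ k / k.factorial * (-(α * k * ((k : ℝ) - 1)) / 2)
        + (-α) / (k - 2).factorial * gstar γ (k - 1) := by
  rw [Qpoly_coeff]
  have hsub : Finset.range 2 ⊆ Finset.range (k / 2 + 1) := by
    apply Finset.range_subset_range.2; omega
  rw [← Finset.sum_subset hsub]
  · rw [Finset.sum_range_succ, Finset.sum_range_one]
    have h0 : (genHermite α (k - 2 * 0)).coeff (k - 2) = -(α * k * ((k : ℝ) - 1)) / 2 := by
      rw [show k - 2 * 0 = k from by omega]
      exact genHermite_coeff_sub2 α k hk
    have h1 : (genHermite α (k - 2 * 1)).coeff (k - 2) = 1 := by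
      rw [show k - 2 * 1 = k - 2 from by omega]
      exact genHermite_coeff_self α (k - 2)
    rw [h0, h1, show k - 2 * 1 = k - 2 from by omega, show k - 2 * 0 = k from by omega]
    simp only [pow_zero, pow_one, Nat.factorial_zero, Nat.factorial_one, Nat.sub_zero,
      Nat.cast_one, one_mul, mul_one]
    ring
  · intro j hj hj2
    rw [Finset.mem_range] at hj hj2
    have hlt : (genHermite α (k - 2 * j)).natDegree < k - 2 :=
      lt_of_le_of_lt (genHermite_natDegree_le _ _) (by omega)
    rw [Polynomial.coeff_eq_zero_of_natDegree_lt hlt, mul_zero]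

end Aux

theorem stmt_11 (α : ℝ) (hα : 0 < α) (γ : ℕ → ℝ) (k : ℕ) (hk : 2 ≤ k)
    (hreal : ∀ z : ℂ, ((Qpoly α γ k).map (algebraMap ℝ ℂ)).IsRoot z → z.im = 0) :
    0 ≤ (gstar γ k) ^ 2 + 2 * gstar γ k * gstar γ (k - 1) := by
  by_cases hA : gstar γ k = 0
  · simp [hA]
  set A := gstar γ k with hAdef
  set B := gstar γ (k - 1) with hBdef
  set F := (k.factorial : ℝ) with hFdef
  set G := ((k - 2).factorial : ℝ) with hGdef
  have hF : 0 < F := by positivity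
  have hG : 0 < G := by positivity
  have hFG : F = (k : ℝ) * ((k : ℝ) - 1) * G := by
    obtain ⟨m, rfl⟩ : ∃ m, k = m + 2 := ⟨k - 2, by omega⟩
    rw [hFdef, hGdef, show m + 2 - 2 = m from by omega,
      show m + 2 = m + 1 + 1 from rfl, Nat.factorial_succ, Nat.factorial_succ]
    push_cast; ring
  set P := Qpoly α γ k with hPdef
  have hcoefk : P.coeff k = A / F := Qpoly_coeff_top α γ k
  have hcoefk0 : P.coeff k ≠ 0 := by
    rw [hcoefk]
    exact div_ne_zero hA (ne_of_gt hF)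
  have hdeg : P.natDegree = k :=
    le_antisymm (Qpoly_natDegree_le α γ k) (Polynomial.le_natDegree_of_ne_zero hcoefk0)
  have hn : 2 ≤ P.natDegree := hdeg ▸ hk
  have h1 : P.coeff (P.natDegree - 1) = 0 := by
    rw [hdeg]; exact Qpoly_coeff_pred α γ k hk
  have hkey := key_lemma P hn h1 hreal
  have hlead : P.leadingCoeff = A / F := by
    rw [Polynomial.leadingCoeff, hdeg, hcoefk]
  have hc2 : P.coeff (P.natDegree - 2) =
      A / F * (-(α * k * ((k : ℝ) - 1)) / 2) + (-α) / G * B := by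
    rw [hdeg]; exact Qpoly_coeff_sub2 α γ k hk
  rw [hlead, hc2] at hkey
  have hid : A / F * (A / F * (-(α * k * ((k : ℝ) - 1)) / 2) + (-α) / G * B) =
      -(α / (2 * F * G)) * (A ^ 2 + 2 * A * B) := by
    rw [hFG]
    have hk1 : (0:ℝ) < (k : ℝ) - 1 := by
      have : (2:ℝ) ≤ (k : ℝ) := by exact_mod_cast hk
      linarith
    have hk0 : (0:ℝ) < (k : ℝ) := by positivity
    field_simp
    ring
  rw [hid] at hkey
  have hpos : 0 < α / (2 * F * G) := by positivity
  nlinarith [hkey, hpos]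
end

section
/- Let T : ℝ[x] → ℝ[x] be a linear operator of the form T = ∑_{k=0}^{N} Q_k(x) D^k with real polynomials Q_k, and suppose T is diagonal with respect to a simple set {B_k(x)} (deg B_k = k) with eigenvalues γ_k, i.e., T[B_n] = γ_n B_n for all n. Then γ_n = ∑_{k=0}^{N} C(n,k) Q_k^{(k)}(x) for all n (the right-hand side is a constant, independent of x), so the polynomial p(x) = ∑_{k=0}^{N} C(x,k) Q_k^{(k)}(x) interpolates the eigenvalues: p(n) = γ_n. -/
open Polynomial

theorem stmt_13 (N : ℕ) (Q : ℕ → Polynomial ℝ) (B : ℕ → Polynomial ℝ)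
    (hB : ∀ k, (B k).natDegree = k) (hB0 : ∀ k, B k ≠ 0) (γ : ℕ → ℝ)
    (hdiag : ∀ n : ℕ,
      ∑ k ∈ Finset.range (N + 1), Q k * (derivative^[k] (B n)) = γ n • B n) :
    ∀ n : ℕ, ∀ x : ℝ,
      γ n = ∑ k ∈ Finset.range (N + 1), (n.choose k : ℝ) * (derivative^[k] (Q k)).eval x := by
  -- leading coefficients of B are nonzero
  have hlead : ∀ k, (B k).coeff k ≠ 0 := by
    intro k
    have := hB k
    have h := mt leadingCoeff_eq_zero.mp (hB0 k)
    rwa [leadingCoeff, hB k] at h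
  -- Step 1: deg Q k ≤ k for k ≤ N
  have hdeg : ∀ k, k ≤ N → (Q k).natDegree ≤ k := by
    intro k
    induction k using Nat.strong_induction_on with
    | _ k ih =>
      intro hkN
      by_cases hQ0 : Q k = 0
      · simp [hQ0]
      have h := hdiag k
      have hred : ∑ j ∈ Finset.range (k + 1), Q j * derivative^[j] (B k) = γ k • B k := by
        rw [← h]
        refine Finset.sum_subset (Finset.range_subset_range.2 (by omega)) ?_
        intro j _ hj
        rw [Finset.mem_range, not_lt] at hj
        rw [iterate_derivative_eq_zero (by rw [hB]; omega), mul_zero]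
      rw [Finset.sum_range_succ] at hred
      have heq : Q k * derivative^[k] (B k)
          = γ k • B k - ∑ j ∈ Finset.range k, Q j * derivative^[j] (B k) := by
        rw [← hred]; ring
      -- derivative^[k] (B k) is a nonzero constant
      have hc0 : (derivative^[k] (B k)).coeff 0 ≠ 0 := by
        rw [coeff_iterate_derivative]
        simp only [zero_add, Nat.descFactorial_self, nsmul_eq_mul]
        exact mul_ne_zero (Nat.cast_ne_zero.2 (Nat.factorial_ne_zero k)) (hlead k)
      have hcne : derivative^[k] (B k) ≠ 0 := fun h => hc0 (by simp [h])
      have hcdeg : (derivative^[k] (B k)).natDegree = 0 :=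
        Nat.le_antisymm (by simpa [hB] using natDegree_iterate_derivative (B k) k) (Nat.zero_le _)
      have hmul : (Q k * derivative^[k] (B k)).natDegree = (Q k).natDegree := by
        rw [natDegree_mul hQ0 hcne, hcdeg, add_zero]
      rw [← hmul, heq]
      refine (natDegree_sub_le _ _).trans (max_le ?_ ?_)
      · exact (natDegree_smul_le _ _).trans (le_of_eq (hB k))
      · refine natDegree_sum_le_of_forall_le _ _ (fun j hj => ?_)
        rw [Finset.mem_range] at hj
        refine natDegree_mul_le.trans ?_
        have h1 := ih j hj (by omega)
        have h2 := natDegree_iterate_derivative (B k) j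
        rw [hB] at h2
        omega
  -- Step 2
  intro n x
  have bne := hlead n
  have h := congrArg (fun p => p.coeff n) (hdiag n)
  simp only [finset_sum_coeff, coeff_smul, smul_eq_mul] at h
  have hterm : ∀ j ∈ Finset.range (N + 1),
      (Q j * derivative^[j] (B n)).coeff n
        = (Q j).coeff j * (n.descFactorial j * (B n).coeff n) := by
    intro j hj
    rw [Finset.mem_range] at hj
    by_cases hjn : j ≤ n
    · have hq : (derivative^[j] (B n)).natDegree ≤ n - j := by
        have := natDegree_iterate_derivative (B n) j
        rwa [hB] at this
      have key := coeff_mul_add_eq_of_natDegree_le (hdeg j (by omega)) hq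
      rw [show j + (n - j) = n from by omega] at key
      rw [key, coeff_iterate_derivative, show n - j + j = n from by omega]
      simp [nsmul_eq_mul]
    · rw [iterate_derivative_eq_zero (by rw [hB]; omega), mul_zero,
        Nat.descFactorial_eq_zero_iff_lt.2 (by omega)]
      simp
  rw [Finset.sum_congr rfl hterm] at h
  have hγ : γ n = ∑ j ∈ Finset.range (N + 1), (Q j).coeff j * (n.descFactorial j : ℝ) := by
    have hbe : γ n * (B n).coeff n
        = (∑ j ∈ Finset.range (N + 1), (Q j).coeff j * (n.descFactorial j : ℝ))
          * (B n).coeff n := by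
      rw [← h, Finset.sum_mul]
      exact Finset.sum_congr rfl (fun j _ => by ring)
    exact mul_right_cancel₀ bne hbe
  rw [hγ]
  refine Finset.sum_congr rfl (fun j hj => ?_)
  rw [Finset.mem_range] at hj
  have hq : derivative^[j] (Q j) = C ((derivative^[j] (Q j)).coeff 0) := by
    refine eq_C_of_natDegree_le_zero ?_
    have := natDegree_iterate_derivative (Q j) j
    have := hdeg j (by omega)
    omega
  rw [hq, eval_C, coeff_iterate_derivative]
  simp only [zero_add, smul_eq_mul, Nat.descFactorial_self]
  rw [Nat.descFactorial_eq_factorial_mul_choose]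
  push_cast
  ring
end

section
/- Let {γ_n} be a real sequence with γ_n → γ, and suppose that for all k ≥ 2 and all p ≥ 0 the shifted quantities g*_{k,p}(-1) = ∑_{n=0}^{k} C(k,n) γ_{n+p}(-1)^{k-n} satisfy (2 g*_{k,p}(-1) + g*_{k+1,p}(-1)) · g*_{k+1,p}(-1) ≥ 0. Then g*_{k,0}(-1) = 0 for all k ≥ 2. -/
/-- Shifted reversed Jensen coefficients: `g*_{k,p}(-1) = ∑_{n=0}^k C(k,n) γ_{n+p} (-1)^{k-n}`. -/
noncomputable def gstarShift (γ : ℕ → ℝ) (k p : ℕ) : ℝ :=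
  ∑ n ∈ Finset.range (k + 1), (k.choose n : ℝ) * γ (n + p) * (-1) ^ (k - n)

lemma gstar_rec (γ : ℕ → ℝ) (k p : ℕ) :
    gstarShift γ (k+1) p = gstarShift γ k (p+1) - gstarShift γ k p := by
  unfold gstarShift
  rw [Finset.sum_range_succ'
    (fun n => (((k+1).choose n : ℝ)) * γ (n + p) * (-1) ^ (k + 1 - n)) (k+1)]
  have h1 : ∀ n ∈ Finset.range (k+1),
      (((k+1).choose (n+1) : ℝ)) * γ (n + 1 + p) * (-1) ^ (k + 1 - (n+1))
      = (k.choose n : ℝ) * γ (n + (p+1)) * (-1) ^ (k - n)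
        + (k.choose (n+1) : ℝ) * γ (n + 1 + p) * (-1) ^ (k - n) := by
    intro n hn
    rw [Nat.choose_succ_succ, Nat.succ_sub_succ]
    have : n + 1 + p = n + (p + 1) := by omega
    rw [this]
    push_cast
    ring
  rw [Finset.sum_congr rfl h1, Finset.sum_add_distrib]
  have h2 : ∑ n ∈ Finset.range (k+1),
      (k.choose (n+1) : ℝ) * γ (n + 1 + p) * (-1) ^ (k - n)
      + ((k+1).choose 0 : ℝ) * γ (0 + p) * (-1) ^ (k + 1 - 0)
      = - ∑ n ∈ Finset.range (k + 1), (k.choose n : ℝ) * γ (n + p) * (-1) ^ (k - n) := by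
    rw [Finset.sum_range_succ'
      (fun n => ((k.choose n : ℝ)) * γ (n + p) * (-1) ^ (k - n)) k]
    rw [Finset.sum_range_succ]
    have h3 : ∀ n ∈ Finset.range k,
        (k.choose (n+1) : ℝ) * γ (n + 1 + p) * (-1) ^ (k - n)
        = - ((k.choose (n+1) : ℝ) * γ (n + 1 + p) * (-1) ^ (k - (n+1))) := by
      intro n hn
      have hn' : n < k := Finset.mem_range.mp hn
      have : k - n = (k - (n+1)) + 1 := by omega
      rw [this, pow_succ]
      ring
    rw [Finset.sum_congr rfl h3, Finset.sum_neg_distrib]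
    simp only [Nat.choose_succ_self, Nat.cast_zero, Nat.choose_zero_right, Nat.cast_one,
      Nat.sub_zero, pow_succ, Nat.sub_self, pow_zero]
    ring
  rw [add_assoc, h2]
  ring

lemma gstar_tendsto (γ : ℕ → ℝ) (L : ℝ) (hγ : Filter.Tendsto γ Filter.atTop (nhds L))
    (k : ℕ) (hk : 1 ≤ k) :
    Filter.Tendsto (fun p => gstarShift γ k p) Filter.atTop (nhds 0) := by
  have hsum : ∑ n ∈ Finset.range (k + 1), (k.choose n : ℝ) * L * (-1) ^ (k - n) = 0 := by
    have h0 := add_pow (1 : ℝ) (-1) k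
    have hk0 : ((1 : ℝ) + (-1)) ^ k = 0 := by
      rw [show (1 : ℝ) + (-1) = 0 by ring, zero_pow (by omega)]
    rw [hk0] at h0
    have : ∑ n ∈ Finset.range (k + 1), (k.choose n : ℝ) * L * (-1) ^ (k - n)
        = L * ∑ n ∈ Finset.range (k + 1), (1:ℝ) ^ n * (-1) ^ (k - n) * (k.choose n : ℝ) := by
      rw [Finset.mul_sum]
      exact Finset.sum_congr rfl (fun n _ => by ring)
    rw [this, ← h0, mul_zero]
  have := Filter.Tendsto.congr' (Filter.Eventually.of_forall (fun p => rfl))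
    (tendsto_finset_sum (Finset.range (k+1))
      (fun n _ => by
        have hn : Filter.Tendsto (fun p => γ (n + p)) Filter.atTop (nhds L) := by
          have := hγ.comp (Filter.tendsto_add_atTop_nat n)
          exact this.congr (fun p => congrArg γ (Nat.add_comm p n))
        exact (hn.const_mul ((k.choose n : ℝ))).mul_const ((-1 : ℝ) ^ (k - n))))
  rw [hsum] at this
  exact this

theorem stmt_19 (γ : ℕ → ℝ) (L : ℝ) (hγ : Filter.Tendsto γ Filter.atTop (nhds L))
    (h : ∀ k, 2 ≤ k → ∀ p : ℕ,
      0 ≤ (2 * gstarShift γ k p + gstarShift γ (k + 1) p) * gstarShift γ (k + 1) p) :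
    ∀ k, 2 ≤ k → gstarShift γ k 0 = 0 := by
  intro k hk
  have hk1 : 1 ≤ k := by omega
  have mono : ∀ p, (gstarShift γ k p) ^ 2 ≤ (gstarShift γ k (p + 1)) ^ 2 := by
    intro p
    have hp := h k hk p
    rw [gstar_rec] at hp
    nlinarith [hp]
  have mono0 : ∀ p, (gstarShift γ k 0) ^ 2 ≤ (gstarShift γ k p) ^ 2 := by
    intro p
    induction p with
    | zero => exact le_refl _
    | succ n ih => exact ih.trans (mono n)
  have hlim : Filter.Tendsto (fun p => (gstarShift γ k p) ^ 2) Filter.atTop (nhds 0) := by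
    simpa using (gstar_tendsto γ L hγ k hk1).pow 2
  have hle : (gstarShift γ k 0) ^ 2 ≤ 0 :=
    ge_of_tendsto hlim (Filter.Eventually.of_forall mono0)
  have h2 : (gstarShift γ k 0) ^ 2 = 0 := le_antisymm hle (sq_nonneg _)
  exact pow_eq_zero_iff (two_ne_zero) |>.mp h2
end
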